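/- arXiv:1111.4842 — 3 statements merged into one kernel-verified Lean document; each statement's English description precedes it below -/
import Mathlib

section
/- For all positive integers n and m, β(nm) = Σ_{d ∣ gcd(n,m)} β(n/d)·β(m/d)·d·μ(d)², where μ is the Möbius function. -/
/-- The Liouville function `λ(n) = (-1)^Ω(n)`. -/
def lam (n : ℕ) : ℤ := (-1) ^ (ArithmeticFunction.cardFactors n)

/-- The alternating sum-of-divisors function `β(n) = ∑_{d ∣ n} d · λ(n/d)`. -/
def beta (n : ℕ) : ℤ := ∑ d ∈ n.divisors, (d : ℤ) * lam (n / d)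

open Finset ArithmeticFunction

lemma lam_one : lam 1 = 1 := by simp [lam]

lemma lam_mul {m n : ℕ} (hm : m ≠ 0) (hn : n ≠ 0) : lam (m * n) = lam m * lam n := by
  simp [lam, ArithmeticFunction.cardFactors_mul hm hn, pow_add]

/-- The Liouville function as an `ArithmeticFunction`. -/
def Lfun : ArithmeticFunction ℤ := ⟨fun n => if n = 0 then 0 else lam n, by simp⟩

lemma Lfun_apply {n : ℕ} (hn : n ≠ 0) : Lfun n = lam n := by
  simp [Lfun, hn]

lemma Lfun_mult : Lfun.IsMultiplicative := by
  constructor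
  · rw [Lfun_apply one_ne_zero, lam_one]
  · intro m n h
    rcases eq_or_ne m 0 with rfl | hm
    · simp [Lfun]
    rcases eq_or_ne n 0 with rfl | hn
    · simp [Lfun]
    rw [Lfun_apply (mul_ne_zero hm hn), Lfun_apply hm, Lfun_apply hn, lam_mul hm hn]

lemma beta_eq {n : ℕ} (hn : n ≠ 0) :
    beta n = (((ArithmeticFunction.id : ArithmeticFunction ℕ) : ArithmeticFunction ℤ) * Lfun) n := by
  rw [ArithmeticFunction.mul_apply, Nat.sum_divisorsAntidiagonal
    (f := fun x y => ((ArithmeticFunction.id : ArithmeticFunction ℕ) : ArithmeticFunction ℤ) x * Lfun y)]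
  apply Finset.sum_congr rfl
  intro d hd
  rw [Nat.mem_divisors] at hd
  have h1 : n / d ≠ 0 := Nat.ne_of_gt (Nat.div_pos (Nat.le_of_dvd (Nat.pos_of_ne_zero hn) hd.1)
    (Nat.pos_of_ne_zero (fun h => hn (by simpa [h] using hd.1))))
  rw [Lfun_apply h1]
  simp [beta]

lemma beta_one : beta 1 = 1 := by simp [beta, lam_one]

lemma beta_mul {a b : ℕ} (ha : a ≠ 0) (hb : b ≠ 0) (h : a.Coprime b) :
    beta (a * b) = beta a * beta b := by
  rw [beta_eq (mul_ne_zero ha hb), beta_eq ha, beta_eq hb]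
  exact ((ArithmeticFunction.isMultiplicative_id.natCast).mul Lfun_mult).map_mul_of_coprime h

lemma beta_prime_pow_eq {p : ℕ} (hp : p.Prime) (k : ℕ) :
    beta (p ^ k) = ∑ i ∈ Finset.range (k + 1), (p : ℤ) ^ i * (-1) ^ (k - i) := by
  rw [beta, Nat.sum_divisors_prime_pow hp]
  apply Finset.sum_congr rfl
  intro i hi
  rw [Finset.mem_range] at hi
  have hik : i ≤ k := by omega
  rw [Nat.pow_div hik hp.pos, lam, ArithmeticFunction.cardFactors_apply_prime_pow hp]
  push_cast
  ring

lemma beta_pp_succ {p : ℕ} (hp : p.Prime) (k : ℕ) :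
    beta (p ^ (k + 1)) = (p : ℤ) ^ (k + 1) - beta (p ^ k) := by
  rw [beta_prime_pow_eq hp, beta_prime_pow_eq hp, Finset.sum_range_succ]
  have : ∑ i ∈ Finset.range (k + 1), (p : ℤ) ^ i * (-1) ^ (k + 1 - i)
      = -∑ i ∈ Finset.range (k + 1), (p : ℤ) ^ i * (-1) ^ (k - i) := by
    rw [← Finset.sum_neg_distrib]
    apply Finset.sum_congr rfl
    intro i hi
    rw [Finset.mem_range] at hi
    have : k + 1 - i = (k - i) + 1 := by omega
    rw [this, pow_succ]
    ring
  rw [this]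
  simp
  ring

lemma beta_pp_key {p : ℕ} (hp : p.Prime) (k : ℕ) :
    ((p : ℤ) + 1) * beta (p ^ k) = (p : ℤ) ^ (k + 1) + (-1) ^ k := by
  induction k with
  | zero => rw [pow_zero, beta_one]; ring
  | succ k ih =>
    rw [beta_pp_succ hp]
    linear_combination -ih

lemma pp_two {p : ℕ} (hp : p.Prime) (a b : ℕ) :
    beta (p ^ (a + 1 + (b + 1))) =
      beta (p ^ (a + 1)) * beta (p ^ (b + 1)) + (p : ℤ) * (beta (p ^ a) * beta (p ^ b)) := by
  have hP : ((p : ℤ) + 1) ≠ 0 := by positivity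
  have k1 := beta_pp_key hp (a + 1 + (b + 1))
  have k2 := beta_pp_key hp (a + 1)
  have k3 := beta_pp_key hp (b + 1)
  have k4 := beta_pp_key hp a
  have k5 := beta_pp_key hp b
  apply mul_left_cancel₀ (mul_ne_zero hP hP)
  calc ((p:ℤ)+1) * ((p:ℤ)+1) * beta (p ^ (a + 1 + (b + 1)))
      = ((p:ℤ)+1) * (((p:ℤ)+1) * beta (p ^ (a + 1 + (b + 1)))) := by ring
    _ = ((p:ℤ)+1) * ((p:ℤ) ^ (a + 1 + (b + 1) + 1) + (-1) ^ (a + 1 + (b + 1))) := by rw [k1]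
    _ = (((p:ℤ)+1) * beta (p ^ (a + 1))) * (((p:ℤ)+1) * beta (p ^ (b + 1)))
        + (p:ℤ) * ((((p:ℤ)+1) * beta (p ^ a)) * (((p:ℤ)+1) * beta (p ^ b))) := by
      rw [k2, k3, k4, k5]; ring
    _ = ((p:ℤ)+1) * ((p:ℤ)+1) * (beta (p ^ (a + 1)) * beta (p ^ (b + 1))
        + (p:ℤ) * (beta (p ^ a) * beta (p ^ b))) := by ring

lemma pp_main {p : ℕ} (hp : p.Prime) (a b : ℕ) :
    beta (p ^ (a + b)) = ∑ i ∈ Finset.range (min a b + 1),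
      beta (p ^ (a - i)) * beta (p ^ (b - i)) * ((p ^ i : ℕ) : ℤ) * ((moebius (p ^ i) : ℤ)) ^ 2 := by
  rcases Nat.eq_zero_or_pos (min a b) with hc | hc
  · rw [hc, Finset.sum_range_one]
    simp only [Nat.sub_zero, pow_zero, Nat.cast_one, moebius_apply_one]
    rcases Nat.min_eq_zero_iff.mp hc with rfl | rfl
    · simp [beta_one]
    · simp [beta_one]
  · obtain ⟨c, hcc⟩ : ∃ c, min a b = c + 1 := ⟨min a b - 1, by omega⟩
    obtain ⟨a', rfl⟩ : ∃ a', a = a' + 1 := ⟨a - 1, by omega⟩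
    obtain ⟨b', rfl⟩ : ∃ b', b = b' + 1 := ⟨b - 1, by omega⟩
    rw [hcc]
    have hsplit : Finset.range (c + 1 + 1) = Finset.Ico 0 2 ∪ Finset.Ico 2 (c + 1 + 1) := by
      rw [Finset.range_eq_Ico, Finset.Ico_union_Ico_eq_Ico (by omega) (by omega)]
    rw [hsplit, Finset.sum_union (by
      apply Finset.Ico_disjoint_Ico_consecutive)]
    have hz : ∑ i ∈ Finset.Ico 2 (c + 1 + 1),
        beta (p ^ (a' + 1 - i)) * beta (p ^ (b' + 1 - i)) * ((p ^ i : ℕ) : ℤ)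
          * ((moebius (p ^ i) : ℤ)) ^ 2 = 0 := by
      apply Finset.sum_eq_zero
      intro i hi
      rw [Finset.mem_Ico] at hi
      rw [ArithmeticFunction.moebius_apply_prime_pow hp (by omega : i ≠ 0), if_neg (by omega)]
      ring
    rw [hz, add_zero]
    rw [show Finset.Ico 0 2 = Finset.range 2 by rw [Finset.range_eq_Ico],
      Finset.sum_range_succ, Finset.sum_range_one]
    simp only [Nat.sub_zero, pow_zero, Nat.cast_one, moebius_apply_one, pow_one,
      Nat.add_sub_cancel, ArithmeticFunction.moebius_apply_prime hp]
    rw [pp_two hp a' b']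
    push_cast
    ring

lemma sum_divisors_coprime_mul {u v : ℕ} (h : Nat.Coprime u v) (hu : u ≠ 0) (hv : v ≠ 0)
    (f : ℕ → ℤ) :
    ∑ d ∈ (u * v).divisors, f d = ∑ x ∈ u.divisors, ∑ y ∈ v.divisors, f (x * y) := by
  rw [← Finset.sum_product']
  apply Finset.sum_nbij' (i := fun d => (Nat.gcd d u, Nat.gcd d v)) (j := fun z => z.1 * z.2)
  · intro d hd
    rw [Nat.mem_divisors] at hd
    rw [Finset.mem_product, Nat.mem_divisors, Nat.mem_divisors]
    exact ⟨⟨Nat.gcd_dvd_right d u, hu⟩, ⟨Nat.gcd_dvd_right d v, hv⟩⟩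
  · intro z hz
    rw [Finset.mem_product, Nat.mem_divisors, Nat.mem_divisors] at hz
    rw [Nat.mem_divisors]
    exact ⟨mul_dvd_mul hz.1.1 hz.2.1, mul_ne_zero hu hv⟩
  · intro d hd
    rw [Nat.mem_divisors] at hd
    exact (Nat.gcd_mul_gcd_eq_iff_dvd_mul_of_coprime h).mpr hd.1
  · intro z hz
    rw [Finset.mem_product, Nat.mem_divisors, Nat.mem_divisors] at hz
    obtain ⟨⟨hx, -⟩, ⟨hy, -⟩⟩ := hz
    have hyu : Nat.Coprime z.2 u := Nat.Coprime.coprime_dvd_left hy h.symm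
    have hxv : Nat.Coprime z.1 v := Nat.Coprime.coprime_dvd_left hx h
    have e1 : Nat.gcd (z.1 * z.2) u = z.1 := by
      rw [hyu.gcd_mul_right_cancel z.1, Nat.gcd_eq_left hx]
    have e2 : Nat.gcd (z.1 * z.2) v = z.2 := by
      rw [hxv.gcd_mul_left_cancel z.2, Nat.gcd_eq_left hy]
    simp [e1, e2]
  · intro d hd
    rw [Nat.mem_divisors] at hd
    rw [(Nat.gcd_mul_gcd_eq_iff_dvd_mul_of_coprime h).mpr hd.1]


lemma main_aux : ∀ N n m : ℕ, n * m ≤ N → 0 < n → 0 < m →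
    beta (n * m) =
      ∑ d ∈ (Nat.gcd n m).divisors,
        beta (n / d) * beta (m / d) * (d : ℤ) * (ArithmeticFunction.moebius d : ℤ) ^ 2 := by
  intro N
  induction N with
  | zero =>
    intro n m h hn hm
    have := Nat.mul_pos hn hm
    omega
  | succ N ih =>
    intro n m hle hn hm
    have hn0 : n ≠ 0 := hn.ne'
    have hm0 : m ≠ 0 := hm.ne'
    by_cases h1 : n * m = 1
    · obtain ⟨rfl, rfl⟩ : n = 1 ∧ m = 1 :=
        ⟨Nat.eq_one_of_mul_eq_one_right h1, Nat.eq_one_of_mul_eq_one_left h1⟩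
      simp [beta_one]
    · obtain ⟨p, hp, hpd⟩ := Nat.exists_prime_and_dvd h1
      set a := n.factorization p with ha
      set b := m.factorization p with hb
      set n' := ordCompl[p] n with hn'
      set m' := ordCompl[p] m with hm'
      have hpn : p ^ a * n' = n := Nat.ordProj_mul_ordCompl_eq_self n p
      have hpm : p ^ b * m' = m := Nat.ordProj_mul_ordCompl_eq_self m p
      have hn'0 : n' ≠ 0 := (Nat.ordCompl_pos p hn0).ne'
      have hm'0 : m' ≠ 0 := (Nat.ordCompl_pos p hm0).ne'
      have hpn' : ¬ p ∣ n' := Nat.not_dvd_ordCompl hp hn0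
      have hpm' : ¬ p ∣ m' := Nat.not_dvd_ordCompl hp hm0
      have hcopn : Nat.Coprime p n' := hp.coprime_iff_not_dvd.mpr hpn'
      have hcopm : Nat.Coprime p m' := hp.coprime_iff_not_dvd.mpr hpm'
      have hab : 1 ≤ a + b := by
        have h2 : (n * m).factorization p = a + b := by
          rw [Nat.factorization_mul hn0 hm0]; simp [ha, hb]
        have h3 := Nat.Prime.factorization_pos_of_dvd hp (mul_ne_zero hn0 hm0) hpd
        omega
      have hg0 : Nat.gcd n m ≠ 0 := (Nat.gcd_pos_of_pos_left m hn).ne'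
      have hgg0 : Nat.gcd n' m' ≠ 0 := (Nat.gcd_pos_of_pos_left m' (Nat.pos_of_ne_zero hn'0)).ne'
      have hpgg : ¬ p ∣ Nat.gcd n' m' := fun hd => hpn' (hd.trans (Nat.gcd_dvd_left n' m'))
      -- the gcd splits
      have h4 : Nat.gcd n' m' = ordCompl[p] (Nat.gcd n m) := by
        refine Nat.eq_of_factorization_eq hgg0 (Nat.ordCompl_pos p hg0).ne' fun q => ?_
        rw [Nat.factorization_gcd hn'0 hm'0, hn', hm',
          Nat.factorization_ordCompl (Nat.gcd n m) p, Nat.factorization_ordCompl n p,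
          Nat.factorization_ordCompl m p, Nat.factorization_gcd hn0 hm0]
        rcases eq_or_ne q p with rfl | hq
        · simp [Finsupp.inf_apply, Finsupp.erase_same]
        · simp [Finsupp.erase_ne hq, Finsupp.inf_apply]
      have h3 : ordProj[p] (Nat.gcd n m) = p ^ (min a b) := by
        rw [Nat.factorization_gcd hn0 hm0]
        rw [Finsupp.inf_apply]
      have hgcd : Nat.gcd n m = p ^ (min a b) * Nat.gcd n' m' := by
        rw [h4, ← h3, Nat.ordProj_mul_ordCompl_eq_self]
      have hcopg : Nat.Coprime (p ^ (min a b)) (Nat.gcd n' m') :=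
        Nat.Coprime.pow_left _ (hp.coprime_iff_not_dvd.mpr hpgg)
      rw [hgcd, sum_divisors_coprime_mul hcopg (pow_ne_zero _ hp.pos.ne') hgg0,
        Nat.sum_divisors_prime_pow hp]
      -- rewrite each term as a product
      have key : ∀ i ∈ Finset.range (min a b + 1), ∀ y ∈ (Nat.gcd n' m').divisors,
          beta (n / (p ^ i * y)) * beta (m / (p ^ i * y)) * ((p ^ i * y : ℕ) : ℤ)
            * (ArithmeticFunction.moebius (p ^ i * y) : ℤ) ^ 2
          = (beta (p ^ (a - i)) * beta (p ^ (b - i)) * ((p ^ i : ℕ) : ℤ)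
              * (ArithmeticFunction.moebius (p ^ i) : ℤ) ^ 2)
            * (beta (n' / y) * beta (m' / y) * (y : ℤ)
              * (ArithmeticFunction.moebius y : ℤ) ^ 2) := by
        intro i hi y hy
        rw [Finset.mem_range] at hi
        rw [Nat.mem_divisors] at hy
        have hia : i ≤ a := by omega
        have hib : i ≤ b := by omega
        have hyn : y ∣ n' := hy.1.trans (Nat.gcd_dvd_left n' m')
        have hym : y ∣ m' := hy.1.trans (Nat.gcd_dvd_right n' m')
        have hy0 : y ≠ 0 := by rintro rfl; exact hn'0 (Nat.eq_zero_of_zero_dvd hyn)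
        have hdivn : n / (p ^ i * y) = p ^ (a - i) * (n' / y) := by
          rw [← hpn, ← Nat.div_mul_div_comm (pow_dvd_pow p hia) hyn,
            Nat.pow_div hia hp.pos]
        have hdivm : m / (p ^ i * y) = p ^ (b - i) * (m' / y) := by
          rw [← hpm, ← Nat.div_mul_div_comm (pow_dvd_pow p hib) hym,
            Nat.pow_div hib hp.pos]
        have hnydvd : n' / y ∣ n' := ⟨y, (Nat.div_mul_cancel hyn).symm⟩
        have hmydvd : m' / y ∣ m' := ⟨y, (Nat.div_mul_cancel hym).symm⟩
        have hny0 : n' / y ≠ 0 := by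
          have := Nat.div_pos (Nat.le_of_dvd (Nat.pos_of_ne_zero hn'0) hyn)
            (Nat.pos_of_ne_zero hy0)
          omega
        have hmy0 : m' / y ≠ 0 := by
          have := Nat.div_pos (Nat.le_of_dvd (Nat.pos_of_ne_zero hm'0) hym)
            (Nat.pos_of_ne_zero hy0)
          omega
        have hcop1 : Nat.Coprime (p ^ (a - i)) (n' / y) :=
          Nat.Coprime.pow_left _ (Nat.Coprime.coprime_dvd_right hnydvd hcopn)
        have hcop2 : Nat.Coprime (p ^ (b - i)) (m' / y) :=
          Nat.Coprime.pow_left _ (Nat.Coprime.coprime_dvd_right hmydvd hcopm)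
        have hcopy : Nat.Coprime (p ^ i) y :=
          Nat.Coprime.pow_left _ (hp.coprime_iff_not_dvd.mpr (fun hpy => hpn' (hpy.trans hyn)))
        rw [hdivn, hdivm, beta_mul (pow_ne_zero _ hp.pos.ne') hny0 hcop1,
          beta_mul (pow_ne_zero _ hp.pos.ne') hmy0 hcop2,
          ArithmeticFunction.isMultiplicative_moebius.map_mul_of_coprime hcopy]
        push_cast
        ring
      rw [Finset.sum_congr rfl (fun i hi => Finset.sum_congr rfl (fun y hy => key i hi y hy)),
        ← Finset.sum_mul_sum]
      -- now finish with pp_main and the induction hypothesis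
      have hmuleq : n * m = p ^ (a + b) * (n' * m') := by
        rw [← hpn, ← hpm, pow_add]; ring
      have h2le : 2 ≤ p ^ (a + b) := le_trans hp.two_le (Nat.le_self_pow (by omega) p)
      have htle : 2 * (n' * m') ≤ n * m := by
        rw [hmuleq]; exact Nat.mul_le_mul_right _ h2le
      have ht1 : 1 ≤ n' * m' := Nat.mul_pos (Nat.pos_of_ne_zero hn'0) (Nat.pos_of_ne_zero hm'0)
      have hNle : n' * m' ≤ N := by omega
      have hIH := ih n' m' hNle (Nat.pos_of_ne_zero hn'0) (Nat.pos_of_ne_zero hm'0)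
      rw [← pp_main hp a b, ← hIH, hmuleq,
        beta_mul (pow_ne_zero _ hp.pos.ne') (mul_ne_zero hn'0 hm'0)
          (Nat.Coprime.pow_left _ (Nat.Coprime.mul_right hcopn hcopm))]

theorem stmt_10 (n m : ℕ) (hn : 0 < n) (hm : 0 < m) :
    beta (n * m) =
      ∑ d ∈ (Nat.gcd n m).divisors,
        beta (n / d) * beta (m / d) * (d : ℤ) * (ArithmeticFunction.moebius d : ℤ) ^ 2 := by
  exact main_aux (n * m) n m le_rfl hn hm
end

section
/- For every positive integer n, β(n²) = Σ_{dk = n} d·μ(d)·σ₂(k), where μ is the Möbius function and σ₂(k) = Σ_{e∣k} e². -/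
open ArithmeticFunction Finset

/-- Liouville as an arithmetic function. -/
noncomputable def lamAF : ArithmeticFunction ℤ :=
  ⟨fun n => if n = 0 then 0 else lam n, by simp⟩

lemma lamAF_apply {n : ℕ} (hn : n ≠ 0) : lamAF n = lam n := if_neg hn

lemma lamAF_isMultiplicative : lamAF.IsMultiplicative := by
  constructor
  · rw [lamAF_apply one_ne_zero]
    simp [lam]
  · intro m n _
    rcases eq_or_ne m 0 with rfl | hm
    · simp [lamAF]
    rcases eq_or_ne n 0 with rfl | hn
    · simp [lamAF]
    rw [lamAF_apply (Nat.mul_ne_zero hm hn), lamAF_apply hm, lamAF_apply hn, lam, lam, lam,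
      cardFactors_mul hm hn, pow_add]

/-- `β` as a Dirichlet convolution. -/
noncomputable def F : ArithmeticFunction ℤ :=
  ((ArithmeticFunction.id : ArithmeticFunction ℕ) : ArithmeticFunction ℤ) * lamAF

lemma F_isMultiplicative : F.IsMultiplicative :=
  isMultiplicative_id.natCast.mul lamAF_isMultiplicative

lemma F_apply (n : ℕ) : F n = beta n := by
  rcases eq_or_ne n 0 with rfl | hn
  · simp [beta]
  rw [F, mul_apply, Nat.sum_divisorsAntidiagonal
    (fun a b => ((ArithmeticFunction.id : ArithmeticFunction ℕ) : ArithmeticFunction ℤ) a * lamAF b),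
    beta]
  refine Finset.sum_congr rfl fun d hd => ?_
  have hd' : d ∣ n := (Nat.mem_divisors.mp hd).1
  have : n / d ≠ 0 := Nat.div_ne_zero_iff_of_dvd hd' |>.mpr ⟨hn, (Nat.pos_of_mem_divisors hd).ne'⟩
  rw [lamAF_apply this]
  simp

/-- `n ↦ β(n²)` as an arithmetic function. -/
noncomputable def Fsq : ArithmeticFunction ℤ :=
  ⟨fun n => F (n ^ 2), by simp⟩

lemma Fsq_isMultiplicative : Fsq.IsMultiplicative := by
  constructor
  · show F (1 ^ 2) = 1
    simpa using F_isMultiplicative.1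
  · intro m n hmn
    show F ((m * n) ^ 2) = F (m ^ 2) * F (n ^ 2)
    rw [mul_pow]
    exact F_isMultiplicative.2 (Nat.Coprime.pow 2 2 hmn)

/-- The right-hand side as an arithmetic function. -/
noncomputable def G : ArithmeticFunction ℤ :=
  (ArithmeticFunction.pmul
      ((ArithmeticFunction.id : ArithmeticFunction ℕ) : ArithmeticFunction ℤ)
      (ArithmeticFunction.moebius)) *
    ((ArithmeticFunction.sigma 2 : ArithmeticFunction ℕ) : ArithmeticFunction ℤ)

lemma G_isMultiplicative : G.IsMultiplicative :=
  (isMultiplicative_id.natCast.pmul isMultiplicative_moebius).mul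
    isMultiplicative_sigma.natCast

lemma key (x : ℤ) (k : ℕ) :
    ∑ i ∈ range (2 * k + 1), (-1) ^ i * x ^ i =
      ∑ i ∈ range (k + 1), x ^ (2 * i) - x * ∑ i ∈ range k, x ^ (2 * i) := by
  induction k with
  | zero => simp
  | succ k ih =>
    have h2 : 2 * (k + 1) + 1 = (2 * k + 1) + 1 + 1 := by ring
    rw [h2, Finset.sum_range_succ, Finset.sum_range_succ, ih,
      Finset.sum_range_succ (n := k + 1), Finset.sum_range_succ (n := k)]
    have e1 : (-1 : ℤ) ^ (2 * k + 1) = -1 := by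
      rw [pow_succ, pow_mul]; simp
    have e2 : (-1 : ℤ) ^ (2 * k + 1 + 1) = 1 := by
      rw [pow_succ, e1]; ring
    rw [e1, e2]
    ring

lemma beta_prime_pow {p : ℕ} (hp : p.Prime) (k : ℕ) :
    beta (p ^ (2 * k)) = ∑ i ∈ range (2 * k + 1), (-1) ^ i * (p : ℤ) ^ i := by
  rw [beta, Nat.sum_divisors_prime_pow hp]
  refine Finset.sum_congr rfl fun i hi => ?_
  have hi' : i ≤ 2 * k := by
    simpa [Nat.lt_succ_iff] using Finset.mem_range.mp hi
  rw [Nat.pow_div hi' hp.pos, lam, cardFactors_apply_prime_pow hp]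
  have : ((-1 : ℤ)) ^ (2 * k - i) = (-1) ^ i := by
    have h1 : ((-1 : ℤ)) ^ (2 * k - i) * (-1) ^ i = (-1) ^ (2 * k) := by
      rw [← pow_add, Nat.sub_add_cancel hi']
    have h2 : ((-1 : ℤ)) ^ (2 * k) = 1 := by rw [pow_mul]; simp
    have h3 : ((-1 : ℤ)) ^ i * (-1) ^ i = 1 := by rw [← pow_add, ← two_mul, pow_mul]; simp
    calc ((-1 : ℤ)) ^ (2 * k - i) = (-1) ^ (2 * k - i) * ((-1) ^ i * (-1) ^ i) := by rw [h3]; ring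
      _ = ((-1) ^ (2 * k - i) * (-1) ^ i) * (-1) ^ i := by ring
      _ = (-1) ^ i := by rw [h1, h2, one_mul]
  rw [this]
  push_cast
  ring

lemma sigma2_prime_pow {p : ℕ} (hp : p.Prime) (m : ℕ) :
    ((ArithmeticFunction.sigma 2 (p ^ m) : ℕ) : ℤ) = ∑ i ∈ range (m + 1), (p : ℤ) ^ (2 * i) := by
  rw [ArithmeticFunction.sigma_apply_prime_pow hp]
  push_cast
  refine Finset.sum_congr rfl fun i _ => ?_
  ring

lemma Fsq_eq_G : Fsq = G := by
  rw [ArithmeticFunction.IsMultiplicative.eq_iff_eq_on_prime_powers _ Fsq_isMultiplicative _ G_isMultiplicative]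
  intro p k hp
  show F ((p ^ k) ^ 2) = G (p ^ k)
  rw [← pow_mul, mul_comm k 2, F_apply, beta_prime_pow hp, key, G, mul_apply,
    Nat.sum_divisorsAntidiagonal (fun a b =>
      (ArithmeticFunction.pmul ((ArithmeticFunction.id : ArithmeticFunction ℕ) :
        ArithmeticFunction ℤ) ArithmeticFunction.moebius) a *
      ((ArithmeticFunction.sigma 2 : ArithmeticFunction ℕ) : ArithmeticFunction ℤ) b),
    Nat.sum_divisors_prime_pow hp]
  rcases Nat.eq_zero_or_pos k with rfl | hk
  · simp [ArithmeticFunction.pmul_apply, ArithmeticFunction.sigma_apply]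
  -- k ≥ 1 : only the terms j = 0, 1 survive
  have hsub : ∑ j ∈ range (k + 1),
      (ArithmeticFunction.pmul ((ArithmeticFunction.id : ArithmeticFunction ℕ) :
        ArithmeticFunction ℤ) ArithmeticFunction.moebius) (p ^ j) *
      ((ArithmeticFunction.sigma 2 : ArithmeticFunction ℕ) :
        ArithmeticFunction ℤ) (p ^ k / p ^ j) =
      ∑ j ∈ range 2,
      (ArithmeticFunction.pmul ((ArithmeticFunction.id : ArithmeticFunction ℕ) :
        ArithmeticFunction ℤ) ArithmeticFunction.moebius) (p ^ j) *
      ((ArithmeticFunction.sigma 2 : ArithmeticFunction ℕ) :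
        ArithmeticFunction ℤ) (p ^ k / p ^ j) := by
    symm
    refine Finset.sum_subset ?_ ?_
    · intro j hj
      rw [Finset.mem_range] at hj ⊢
      omega
    · intro j hj hj2
      rw [Finset.mem_range] at hj hj2
      have hj' : j ≠ 0 ∧ j ≠ 1 := by omega
      rw [ArithmeticFunction.pmul_apply, moebius_apply_prime_pow hp hj'.1, if_neg hj'.2]
      simp
  rw [hsub, Finset.sum_range_succ (n := 1), Finset.sum_range_one]
  rw [ArithmeticFunction.pmul_apply, ArithmeticFunction.pmul_apply]
  rw [pow_zero, pow_one, Nat.div_one, moebius_apply_one,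
    moebius_apply_prime hp]
  have hdiv : p ^ k / p = p ^ (k - 1) := by
    have h := Nat.pow_div (n := 1) hk hp.pos
    simpa using h
  rw [hdiv]
  simp only [natCoe_apply, ArithmeticFunction.id_apply]
  rw [sigma2_prime_pow hp, sigma2_prime_pow hp, show k - 1 + 1 = k by omega]
  push_cast
  ring

theorem stmt_14 (n : ℕ) (hn : 0 < n) :
    beta (n ^ 2) =
      ∑ p ∈ n.divisorsAntidiagonal,
        (p.1 : ℤ) * (ArithmeticFunction.moebius p.1 : ℤ) *
          (ArithmeticFunction.sigma 2 p.2 : ℤ) := by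
  have h1 : beta (n ^ 2) = Fsq n := (F_apply (n ^ 2)).symm
  rw [h1, Fsq_eq_G, G, mul_apply]
  refine Finset.sum_congr rfl fun q hq => ?_
  rw [ArithmeticFunction.pmul_apply, natCoe_apply, natCoe_apply, ArithmeticFunction.id_apply]
  all_goals (push_cast; ring)
end

section
/- For every positive integer n, β*(n) = Σ_{dk² = n} β(d)·k·q(k), the sum being over all pairs (d, k) with dk² = n, where β*(n) = Σ_{d ∥ n} d·λ(n/d) is the sum over unitary divisors d of n (i.e., d ∣ n with gcd(d, n/d) = 1) and q is the characteristic function of the squarefree numbers. -/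
/-- The unitary analog `β*(n) = ∑_{d ∥ n} d · λ(n/d)`, the sum being over unitary divisors. -/
def betaStar (n : ℕ) : ℤ :=
  ∑ d ∈ n.divisors.filter (fun d => Nat.Coprime d (n / d)), (d : ℤ) * lam (n / d)

open Finset ArithmeticFunction
open scoped ArithmeticFunction.Moebius ArithmeticFunction.zeta

lemma lam_mul_s17 {a b : ℕ} (ha : a ≠ 0) (hb : b ≠ 0) : lam (a * b) = lam a * lam b := by
  rw [lam, lam, lam, cardFactors_mul ha hb, pow_add]

lemma sf_ite (k : ℕ) : (if Squarefree k then (1 : ℤ) else 0) = μ k * lam k := by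
  by_cases h : Squarefree k
  · rw [if_pos h, moebius_apply_of_squarefree h, lam, ← mul_pow, neg_mul_neg, one_mul, one_pow]
  · rw [if_neg h, moebius_eq_zero_of_not_squarefree h, zero_mul]

lemma moe_sum (m : ℕ) (hm : m ≠ 0) :
    (∑ t ∈ m.divisors, μ t : ℤ) = if m = 1 then 1 else 0 := by
  have h := congrArg (fun f : ArithmeticFunction ℤ => f m) moebius_mul_coe_zeta
  simp only [mul_apply, one_apply] at h
  rw [← h,
    Nat.sum_divisorsAntidiagonal (f := fun x y => (μ x) * ((ζ : ArithmeticFunction ℤ) y))]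
  apply Finset.sum_congr rfl
  intro x hx
  rw [Nat.mem_divisors] at hx
  have hx2 : m / x ≠ 0 := (Nat.div_pos (Nat.le_of_dvd (Nat.pos_of_ne_zero hm) hx.1)
    (Nat.pos_of_mem_divisors (Nat.mem_divisors.mpr hx))).ne'
  rw [natCoe_apply, zeta_apply_ne hx2, Nat.cast_one, mul_one]

theorem stmt_17 (n : ℕ) (hn : 0 < n) :
    betaStar n =
      ∑ k ∈ n.divisors.filter (fun k => k ^ 2 ∣ n),
        beta (n / k ^ 2) * (k : ℤ) * (if Squarefree k then 1 else 0) := by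
  have hn0 : n ≠ 0 := hn.ne'
  -- rewrite LHS with moebius sums
  rw [betaStar, Finset.sum_filter]
  have hL : ∀ d ∈ n.divisors,
      (if Nat.Coprime d (n / d) then (d : ℤ) * lam (n / d) else 0)
        = ∑ t ∈ (Nat.gcd d (n / d)).divisors, (μ t : ℤ) * ((d : ℤ) * lam (n / d)) := by
    intro d hd
    rw [← Finset.sum_mul,
      moe_sum _ (Nat.gcd_ne_zero_left (Nat.pos_of_mem_divisors hd).ne'),
      ite_mul, one_mul, zero_mul]
  rw [Finset.sum_congr rfl hL, Finset.sum_sigma']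
  -- rewrite RHS
  have hR : ∀ k ∈ n.divisors.filter (fun k => k ^ 2 ∣ n),
      beta (n / k ^ 2) * (k : ℤ) * (if Squarefree k then 1 else 0)
        = ∑ e ∈ (n / k ^ 2).divisors,
            ((e : ℤ) * lam ((n / k ^ 2) / e)) * (k : ℤ) * (μ k * lam k) := by
    intro k hk
    rw [sf_ite, beta, Finset.sum_mul, Finset.sum_mul]
  rw [Finset.sum_congr rfl hR, Finset.sum_sigma']
  refine Finset.sum_nbij' (fun p => ⟨p.2, p.1 / p.2⟩) (fun p => ⟨p.1 * p.2, p.1⟩) ?_ ?_ ?_ ?_ ?_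
  · rintro ⟨d, t⟩ hp
    rw [Finset.mem_sigma, Nat.mem_divisors, Nat.mem_divisors] at hp
    obtain ⟨⟨hdn, -⟩, htg, hg0⟩ := hp
    have ht1 : t ∣ d := htg.trans (Nat.gcd_dvd_left _ _)
    have ht2 : t ∣ n / d := htg.trans (Nat.gcd_dvd_right _ _)
    have ht0 : t ≠ 0 := by rintro rfl; exact hg0 (Nat.eq_zero_of_zero_dvd htg)
    have hdtn : d * t ∣ n := by
      have := mul_dvd_mul_left d ht2
      rwa [Nat.mul_div_cancel' hdn] at this
    have htsq : t ^ 2 ∣ n := by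
      have := mul_dvd_mul ht1 ht2
      rwa [Nat.mul_div_cancel' hdn, ← pow_two] at this
    rw [Finset.mem_sigma, Finset.mem_filter, Nat.mem_divisors, Nat.mem_divisors]
    refine ⟨⟨⟨ht1.trans hdn, hn0⟩, htsq⟩, ?_, ?_⟩
    · rw [Nat.dvd_div_iff_mul_dvd htsq]
      have h2 : t ^ 2 * (d / t) = d * t := by
        rw [pow_two, mul_assoc, Nat.mul_div_cancel' ht1, mul_comm]
      rw [h2]; exact hdtn
    · exact (Nat.div_pos (Nat.le_of_dvd hn htsq)
        (Nat.pos_of_ne_zero (pow_ne_zero _ ht0))).ne'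
  · rintro ⟨k, e⟩ hp
    rw [Finset.mem_sigma, Finset.mem_filter, Nat.mem_divisors, Nat.mem_divisors] at hp
    obtain ⟨⟨⟨hkn, -⟩, hk2⟩, hek, hq0⟩ := hp
    have hk0 : k ≠ 0 := by
      rintro rfl; exact hn0 (Nat.eq_zero_of_zero_dvd (by simpa using hk2))
    have he0 : e ≠ 0 := by rintro rfl; exact hq0 (Nat.eq_zero_of_zero_dvd hek)
    have hken : k ^ 2 * e ∣ n := by
      have := mul_dvd_mul_left (k ^ 2) hek
      rwa [Nat.mul_div_cancel' hk2] at this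
    have hke : k * e ∣ n := dvd_trans (by rw [pow_two, mul_assoc]; exact dvd_mul_left _ _) hken
    rw [Finset.mem_sigma, Nat.mem_divisors, Nat.mem_divisors]
    refine ⟨⟨hke, hn0⟩, ?_, Nat.gcd_ne_zero_left (Nat.mul_ne_zero hk0 he0)⟩
    refine Nat.dvd_gcd (dvd_mul_right _ _) ?_
    rw [Nat.dvd_div_iff_mul_dvd hke]
    have h3 : k * e * k = k ^ 2 * e := by ring
    rw [h3]; exact hken
  · rintro ⟨d, t⟩ hp
    rw [Finset.mem_sigma, Nat.mem_divisors, Nat.mem_divisors] at hp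
    have ht1 : t ∣ d := hp.2.1.trans (Nat.gcd_dvd_left _ _)
    simp [Nat.mul_div_cancel' ht1]
  · rintro ⟨k, e⟩ hp
    rw [Finset.mem_sigma, Finset.mem_filter, Nat.mem_divisors] at hp
    have hk0 : k ≠ 0 := by
      rintro rfl; exact hn0 (Nat.eq_zero_of_zero_dvd (by simpa using hp.1.2))
    simp [Nat.mul_div_cancel_left _ (Nat.pos_of_ne_zero hk0)]
  · rintro ⟨d, t⟩ hp
    rw [Finset.mem_sigma, Nat.mem_divisors, Nat.mem_divisors] at hp
    obtain ⟨⟨hdn, -⟩, htg, hg0⟩ := hp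
    have ht1 : t ∣ d := htg.trans (Nat.gcd_dvd_left _ _)
    have ht2 : t ∣ n / d := htg.trans (Nat.gcd_dvd_right _ _)
    have ht0 : t ≠ 0 := by rintro rfl; exact hg0 (Nat.eq_zero_of_zero_dvd htg)
    have hdtn : d * t ∣ n := by
      have := mul_dvd_mul_left d ht2
      rwa [Nat.mul_div_cancel' hdn] at this
    have hA : (n / t ^ 2) / (d / t) = n / (d * t) := by
      rw [Nat.div_div_eq_div_mul]
      congr 1
      rw [pow_two, mul_assoc, Nat.mul_div_cancel' ht1, mul_comm]
    have hm0 : n / (d * t) ≠ 0 := (Nat.div_pos (Nat.le_of_dvd hn hdtn)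
      (Nat.pos_of_ne_zero (Nat.mul_ne_zero (fun h => hn0 (Nat.eq_zero_of_zero_dvd (h ▸ hdn))) ht0))).ne'
    have hB : n / d = t * (n / (d * t)) := by
      rw [← Nat.div_div_eq_div_mul, Nat.mul_div_cancel' ht2]
    dsimp only
    rw [hA, hB, lam_mul_s17 ht0 hm0]
    have hcast : (t : ℤ) * ((d / t : ℕ) : ℤ) = (d : ℤ) :=
      mod_cast congrArg (Nat.cast : ℕ → ℤ) (Nat.mul_div_cancel' ht1)
    linear_combination (-(μ t * lam t * lam (n / (d * t)))) * hcast
end
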